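/- Let n ≥ 3, let G = ⟨α, τ : α^n = τ^2 = 1, τα = α^{-1}τ⟩ be the dihedral group of order 2n, and let S be a sequence over G with S ∉ F(⟨α⟩). Write S_{⟨α⟩} = α^{x_1} ⋯ α^{x_s} with x_1, …, x_s ∈ ℤ/nℤ, and let ℓ = |S_{τ⟨α⟩}| ≥ 1. Then π(S) = τ^ℓ · ({x_1, −x_1} + ⋯ + {x_s, −x_s} + (−1)^ℓ Σ_{⌊ℓ/2⌋}(2 S^+_{τ⟨α⟩}) − (−1)^ℓ σ(S^+_{τ⟨α⟩}))^*, where for a subset Z ⊆ ℤ/nℤ, Z^* = {α^z : z ∈ Z}. -/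

import Mathlib

namespace ProductOne

open scoped Classical

variable {G : Type*} [Group G]

/-- `S` is a product-one sequence over `G`: its terms can be ordered with product `1`. -/
def IsProductOne (S : Multiset G) : Prop :=
  ∃ l : List G, (l : Multiset G) = S ∧ l.prod = 1

/-- `S` is an atom (a minimal product-one sequence): it is a nontrivial product-one
sequence that is not the concatenation of two nontrivial product-one sequences. -/
def IsAtomSeq (S : Multiset G) : Prop :=
  S ≠ 0 ∧ IsProductOne S ∧
    ∀ A B : Multiset G, S = A + B → IsProductOne A → IsProductOne B → A = 0 ∨ B = 0

/-- `S` is a sequence over the subset `G₀ ⊆ G`. -/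
def SeqOn (G₀ : Set G) (S : Multiset G) : Prop := ∀ g ∈ S, g ∈ G₀

/-- `S` is an atom of the monoid `B(G₀)` of product-one sequences over `G₀`. -/
def IsAtomSeqOn (G₀ : Set G) (S : Multiset G) : Prop := SeqOn G₀ S ∧ IsAtomSeq S

/-- The set of lengths `L(A)` of factorizations of `A` into atoms over `G₀`. -/
def lengthsOn (G₀ : Set G) (A : Multiset G) : Set ℕ :=
  {k | ∃ f : Multiset (Multiset G), Multiset.card f = k ∧
        (∀ U ∈ f, IsAtomSeqOn G₀ U) ∧ f.sum = A}

/-- The set of lengths `L(A)` over the whole group. -/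
def lengths (A : Multiset G) : Set ℕ := lengthsOn Set.univ A

/-- The set of distances of a set `L ⊆ ℕ`. -/
def distancesOf (L : Set ℕ) : Set ℕ :=
  {d | 0 < d ∧ ∃ a, a ∈ L ∧ a + d ∈ L ∧ ∀ b ∈ L, ¬(a < b ∧ b < a + d)}

/-- The set of distances `Δ(G₀)` of the monoid `B(G₀)`. -/
def DeltaOn (G₀ : Set G) : Set ℕ :=
  {d | ∃ A : Multiset G, SeqOn G₀ A ∧ IsProductOne A ∧ d ∈ distancesOf (lengthsOn G₀ A)}

/-- The set of distances `Δ(G)` of `B(G)`. -/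
def Delta (G : Type*) [Group G] : Set ℕ := DeltaOn (Set.univ : Set G)

/-- The large Davenport constant of `G₀`: maximal length of an atom of `B(G₀)`. -/
noncomputable def DavenportOn (G₀ : Set G) : ℕ :=
  sSup {k | ∃ S : Multiset G, IsAtomSeqOn G₀ S ∧ Multiset.card S = k}

/-- The large Davenport constant `D(G)`. -/
noncomputable def Davenport (G : Type*) [Group G] : ℕ :=
  DavenportOn (Set.univ : Set G)

/-- The small Davenport constant `d(G₀)`: maximal length of a product-one free
sequence over `G₀`. -/
noncomputable def smallDavenportOn (G₀ : Set G) : ℕ :=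
  sSup {k | ∃ S : Multiset G, SeqOn G₀ S ∧ Multiset.card S = k ∧
        ∀ T : Multiset G, T ≤ S → T ≠ 0 → ¬IsProductOne T}

/-- `Δ*(G) = {min Δ(G₀) : G₀ ⊆ G with Δ(G₀) ≠ ∅}`. -/
def DeltaStar (G : Type*) [Group G] : Set ℕ :=
  {d | ∃ G₀ : Set G, (DeltaOn G₀).Nonempty ∧ d = sInf (DeltaOn G₀)}

/-- The elasticity `ρ(L) = max L / min L` of a set of lengths (with the set of
positive elements used, and `ρ = 1` if there are none). -/
noncomputable def elasticity (L : Set ℕ) : ℚ :=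
  if (L ∩ {k | 0 < k}).Nonempty then
    ((sSup (L ∩ {k | 0 < k}) : ℕ) : ℚ) / ((sInf (L ∩ {k | 0 < k}) : ℕ) : ℚ)
  else 1

/-- The elasticity `ρ(G₀)` of the monoid `B(G₀)`. -/
noncomputable def rhoOn (G₀ : Set G) : ℝ :=
  sSup {x : ℝ | ∃ A : Multiset G, SeqOn G₀ A ∧ IsProductOne A ∧
    x = (elasticity (lengthsOn G₀ A) : ℝ)}

/-- `Δ*_ρ(G) = {min Δ(G₀) : G₀ ⊆ G with ρ(G₀) = D(G)/2}`. -/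
noncomputable def DeltaRhoStar (G : Type*) [Group G] : Set ℕ :=
  {d | ∃ G₀ : Set G, rhoOn G₀ = (Davenport G : ℝ) / 2 ∧ d = sInf (DeltaOn G₀)}

/-- Divisibility in the monoid `B(G)`. -/
def BDvd (A S : Multiset G) : Prop :=
  ∃ C : Multiset G, IsProductOne C ∧ S = A + C

/-- The `ω`-invariant `ω(B(G), A)`. -/
noncomputable def omegaAt (A : Multiset G) : ℕ∞ :=
  sInf {N : ℕ∞ | ∀ f : Multiset (Multiset G),
    (∀ B ∈ f, IsProductOne B) → BDvd A f.sum →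
    ∃ t ≤ f, (Multiset.card t : ℕ∞) ≤ N ∧ BDvd A t.sum}

/-- `ω(G) = sup {ω(B(G), U) : U an atom of B(G)}`. -/
noncomputable def omegaInv (G : Type*) [Group G] : ℕ∞ :=
  ⨆ U ∈ {U : Multiset G | IsAtomSeq U}, omegaAt U

/-- `z` is a factorization of `A` into atoms. -/
def IsFactorization (A : Multiset G) (z : Multiset (Multiset G)) : Prop :=
  (∀ U ∈ z, IsAtomSeq U) ∧ z.sum = A

/-- The distance between two factorizations. -/
noncomputable def factDist (z z' : Multiset (Multiset G)) : ℕ :=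
  letI := Classical.decEq (Multiset G)
  max (Multiset.card (z - z')) (Multiset.card (z' - z))

/-- The catenary degree `c(A)`. -/
noncomputable def catenaryAt (A : Multiset G) : ℕ∞ :=
  sInf {N : ℕ∞ | ∀ z z' : Multiset (Multiset G),
    IsFactorization A z → IsFactorization A z' →
    Relation.ReflTransGen
      (fun x y => IsFactorization A y ∧ (factDist x y : ℕ∞) ≤ N) z z'}

/-- The set of positive catenary degrees `Ca(G)`. -/
noncomputable def CatenarySet (G : Type*) [Group G] : Set ℕ∞ :=
  {c | ∃ A : Multiset G, IsProductOne A ∧ catenaryAt A = c ∧ 0 < c}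

/-- The catenary degree `c(G)` of `B(G)`. -/
noncomputable def catenaryDegree (G : Type*) [Group G] : ℕ∞ :=
  ⨆ A ∈ {A : Multiset G | IsProductOne A}, catenaryAt A

/-- The cross number `k(S)` of a sequence. -/
noncomputable def crossNumber (S : Multiset G) : ℚ :=
  (S.map fun g => (1 : ℚ) / (orderOf g : ℚ)).sum

/-- The system of sets of lengths `L(G)`. -/
def LSystem (G : Type*) [Group G] : Set (Set ℕ) :=
  {L | ∃ A : Multiset G, IsProductOne A ∧ L = lengths A}

/-- The set of products `π(S)` of all orderings of the terms of `S`. -/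
def piSet (S : Multiset G) : Set G :=
  {g | ∃ l : List G, (l : Multiset G) = S ∧ l.prod = g}

/-- The sumset `{x₁, -x₁} + ⋯ + {x_s, -x_s}` for a sequence `a = x₁ ⋯ x_s`. -/
def signedSums {α : Type*} [AddCommGroup α] (a : Multiset α) : Set α :=
  {z | ∃ t ≤ a, z = t.sum + t.sum - a.sum}

/-- `Σ_k(T)`: the set of sums of `k`-term subsequences of `T`. -/
def subseqSums {α : Type*} [AddCommMonoid α] (k : ℕ) (T : Multiset α) : Set α :=
  {z | ∃ t ≤ T, Multiset.card t = k ∧ t.sum = z}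

/-- The subsequence `S_X` of all terms of `S` lying in `X`. -/
noncomputable def restrictTo (X : Set G) (S : Multiset G) : Multiset G :=
  letI := Classical.decPred fun g => g ∈ X
  S.filter fun g => g ∈ X

/-- The maximum multiplicity `h(S)` of a term of `S`. -/
noncomputable def maxMultiplicity {α : Type*} (S : Multiset α) : ℕ :=
  letI := Classical.decEq α
  S.toFinset.sup S.count

end ProductOne

namespace Dih14
open DihedralGroup

variable {n : ℕ}

def isSrB : DihedralGroup n → Bool
  | .sr _ => true
  | .r _ => false

def srct (l : List (DihedralGroup n)) : ℕ := l.countP isSrB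

@[simp] lemma srct_nil : srct ([] : List (DihedralGroup n)) = 0 := rfl

@[simp] lemma srct_cons_r (x : ZMod n) (l : List (DihedralGroup n)) :
    srct (DihedralGroup.r x :: l) = srct l := by
  simp [srct, List.countP_cons, isSrB]

@[simp] lemma srct_cons_sr (y : ZMod n) (l : List (DihedralGroup n)) :
    srct (DihedralGroup.sr y :: l) = srct l + 1 := by
  simp [srct, List.countP_cons, isSrB]

def sval : List (DihedralGroup n) → ZMod n
  | [] => 0
  | DihedralGroup.r x :: t => (-1) ^ srct t * x + sval t
  | DihedralGroup.sr y :: t => (-1) ^ srct t * y + sval t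

@[simp] lemma sval_nil : sval ([] : List (DihedralGroup n)) = 0 := rfl
@[simp] lemma sval_cons_r (x : ZMod n) (t : List (DihedralGroup n)) :
    sval (DihedralGroup.r x :: t) = (-1) ^ srct t * x + sval t := rfl
@[simp] lemma sval_cons_sr (y : ZMod n) (t : List (DihedralGroup n)) :
    sval (DihedralGroup.sr y :: t) = (-1) ^ srct t * y + sval t := rfl

lemma sr0_sq : (sr 0 : DihedralGroup n) ^ 2 = 1 := by
  rw [sq, sr_mul_sr, sub_zero, ← one_def]

lemma sr0_pow_even {k : ℕ} (hk : Even k) : (sr 0 : DihedralGroup n) ^ k = 1 := by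
  obtain ⟨m, rfl⟩ := hk
  rw [← two_mul, pow_mul, sr0_sq, one_pow]

lemma sr0_pow_odd {k : ℕ} (hk : Odd k) : (sr 0 : DihedralGroup n) ^ k = sr 0 := by
  obtain ⟨m, rfl⟩ := hk
  rw [pow_succ, sr0_pow_even (even_two_mul m), one_mul]

lemma prod_eq (l : List (DihedralGroup n)) :
    l.prod = (sr 0) ^ srct l * r (sval l) := by
  induction l with
  | nil => simp [one_def, -r_zero]
  | cons g t ih =>
      cases g with
      | r x =>
          rw [List.prod_cons, ih, sval_cons_r, srct_cons_r]
          rcases Nat.even_or_odd (srct t) with h | h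
          · rw [sr0_pow_even h, h.neg_one_pow, one_mul, one_mul, one_mul, r_mul_r]
          · rw [sr0_pow_odd h, h.neg_one_pow, ← mul_assoc, r_mul_sr, sr_mul_r, sr_mul_r]
            ring_nf
      | sr y =>
          rw [List.prod_cons, ih, sval_cons_sr, srct_cons_sr]
          rcases Nat.even_or_odd (srct t) with h | h
          · rw [sr0_pow_even h, h.neg_one_pow, one_mul, one_mul,
              sr0_pow_odd (by simp [Nat.even_add_one, h] : Odd (srct t + 1)),
              sr_mul_r, sr_mul_r, zero_add]
          · rw [sr0_pow_odd h, h.neg_one_pow,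
              sr0_pow_even (by simpa [Nat.even_add_one, Nat.odd_iff] using h : Even (srct t + 1)),
              ← mul_assoc, sr_mul_sr, r_mul_r, one_mul]
            ring_nf

lemma srct_eq (l : List (DihedralGroup n)) (a b : Multiset (ZMod n))
    (h : (l : Multiset (DihedralGroup n)) = a.map r + b.map sr) :
    srct l = Multiset.card b := by
  have hcoe : ((a.toList.map r ++ b.toList.map sr : List (DihedralGroup n)) : Multiset (DihedralGroup n)) = a.map r + b.map sr := by
    rw [← Multiset.coe_add]
    simp [← Multiset.map_coe, Multiset.coe_toList]
  have hperm : l.Perm (a.toList.map r ++ b.toList.map sr) := by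
    rw [← Multiset.coe_eq_coe, hcoe, h]
  rw [srct, hperm.countP_eq]
  simp [List.countP_append, List.countP_map, Function.comp_def, isSrB]

@[simp] lemma srct_map_r (A : List (ZMod n)) : srct (A.map DihedralGroup.r) = 0 := by
  simp [srct, List.countP_map, Function.comp_def, isSrB]

lemma srct_append (l1 l2 : List (DihedralGroup n)) :
    srct (l1 ++ l2) = srct l1 + srct l2 := by
  simp [srct, List.countP_append]

lemma sval_map_r_append (A : List (ZMod n)) (l2 : List (DihedralGroup n)) :
    sval (A.map DihedralGroup.r ++ l2) = (-1) ^ srct l2 * A.sum + sval l2 := by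
  induction A with
  | nil => simp
  | cons x A ih =>
      simp only [List.map_cons, List.cons_append, sval_cons_r, srct_append, srct_map_r,
        zero_add, ih, List.sum_cons]
      ring

lemma exists_of_le_map {α β : Type*} [DecidableEq α] [DecidableEq β] (f : α → β) :
    ∀ (u : Multiset β) (b : Multiset α), u ≤ b.map f → ∃ u' ≤ b, u'.map f = u := by
  intro u
  induction u using Multiset.induction_on with
  | empty => exact fun b _ => ⟨0, Multiset.zero_le b, rfl⟩
  | cons x u ih =>
      intro b h
      have hx : x ∈ Multiset.map f b := Multiset.mem_of_le h (Multiset.mem_cons_self x u)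
      obtain ⟨y, hy, hfy⟩ := Multiset.mem_map.1 hx
      have hbm : Multiset.map f b = f y ::ₘ Multiset.map f (b.erase y) := by
        conv_lhs => rw [← Multiset.cons_erase hy]
        rw [Multiset.map_cons]
      have hu : u ≤ Multiset.map f (b.erase y) := by
        have h2 := Multiset.erase_le_erase x h
        rwa [Multiset.erase_cons_head, hbm, hfy, Multiset.erase_cons_head] at h2
      obtain ⟨u'', hu'', hmap⟩ := ih (b.erase y) hu
      refine ⟨y ::ₘ u'', ?_, ?_⟩
      · calc y ::ₘ u'' ≤ y ::ₘ b.erase y := Multiset.cons_le_cons y hu''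
          _ = b := Multiset.cons_erase hy
      · rw [Multiset.map_cons, hmap, hfy]

lemma sum_map_two (s : Multiset (ZMod n)) :
    (s.map fun v => 2 * v).sum = 2 * s.sum := by
  induction s using Multiset.induction_on with
  | empty => simp
  | cons x s ih => simp [ih, mul_add]

lemma sval_coe_map_r : ∀ (t : List (DihedralGroup n)) (a : Multiset (ZMod n)),
    (t : Multiset (DihedralGroup n)) = a.map DihedralGroup.r → sval t = a.sum := by
  intro t
  induction t with
  | nil =>
      intro a h
      have : a = 0 := by
        rw [← Multiset.map_eq_zero (f := (DihedralGroup.r : ZMod n → DihedralGroup n)), ← h]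
        rfl
      simp [this]
  | cons g t' ih =>
      intro a h
      rw [← Multiset.cons_coe] at h
      have hg : g ∈ a.map DihedralGroup.r := by
        rw [← h]; exact Multiset.mem_cons_self g _
      obtain ⟨x, hxa, rfl⟩ := Multiset.mem_map.1 hg
      have ht' : (t' : Multiset (DihedralGroup n)) = (a.erase x).map DihedralGroup.r := by
        have h' : DihedralGroup.r x ::ₘ (t' : Multiset (DihedralGroup n)) =
            DihedralGroup.r x ::ₘ (a.erase x).map DihedralGroup.r := by
          rw [h]
          conv_lhs => rw [← Multiset.cons_erase hxa, Multiset.map_cons]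
        exact (Multiset.cons_inj_right _).1 h'
      have h0 : srct t' = 0 := by
        have := srct_eq t' (a.erase x) 0 (by simpa using ht')
        simpa using this
      rw [sval_cons_r, h0, pow_zero, one_mul, ih _ ht']
      conv_rhs => rw [← Multiset.cons_erase hxa, Multiset.sum_cons]

lemma forward : ∀ (l : List (DihedralGroup n)) (a b : Multiset (ZMod n)),
    (l : Multiset (DihedralGroup n)) = a.map DihedralGroup.r + b.map DihedralGroup.sr →
    b ≠ 0 →
    ∃ t ≤ a, ∃ s ≤ b, Multiset.card s = (Multiset.card b + 1) / 2 ∧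
      sval l = (t.sum + t.sum - a.sum) + (s.sum + s.sum - b.sum) := by
  intro l
  induction l with
  | nil =>
      intro a b h hb
      exfalso
      apply hb
      have := congrArg Multiset.card h
      simp only [Multiset.coe_nil, Multiset.card_zero, Multiset.card_add,
        Multiset.card_map] at this
      rw [← Multiset.card_eq_zero]
      omega
  | cons g rest ih =>
      intro a b h hb
      rw [← Multiset.cons_coe] at h
      have hg : g ∈ a.map DihedralGroup.r + b.map DihedralGroup.sr := by
        rw [← h]; exact Multiset.mem_cons_self g _
      cases g with
      | r x =>
          rcases Multiset.mem_add.1 hg with h1 | h1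
          swap
          · obtain ⟨y, _, hy⟩ := Multiset.mem_map.1 h1
            exact absurd hy (by simp)
          obtain ⟨x', hxa, hx'⟩ := Multiset.mem_map.1 h1
          have hxx : x' = x := by injection hx'
          subst hxx
          have ht : (rest : Multiset (DihedralGroup n)) =
              (a.erase x').map DihedralGroup.r + b.map DihedralGroup.sr := by
            have h' : DihedralGroup.r x' ::ₘ (rest : Multiset (DihedralGroup n)) =
                DihedralGroup.r x' ::ₘ
                  ((a.erase x').map DihedralGroup.r + b.map DihedralGroup.sr) := by
              rw [h]
              conv_lhs => rw [← Multiset.cons_erase hxa, Multiset.map_cons,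
                Multiset.cons_add]
            exact (Multiset.cons_inj_right _).1 h'
          obtain ⟨t', ht', s, hs, hcard, hval⟩ := ih (a.erase x') b ht hb
          have hsr : srct rest = Multiset.card b := srct_eq rest _ _ ht
          have hasum : a.sum = x' + (a.erase x').sum := by
            conv_lhs => rw [← Multiset.cons_erase hxa, Multiset.sum_cons]
          rcases Nat.even_or_odd (Multiset.card b) with hpar | hpar
          · refine ⟨x' ::ₘ t', ?_, s, hs, hcard, ?_⟩
            · calc x' ::ₘ t' ≤ x' ::ₘ a.erase x' := Multiset.cons_le_cons x' ht'
                _ = a := Multiset.cons_erase hxa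
            · rw [sval_cons_r, hsr, hpar.neg_one_pow, hval, Multiset.sum_cons, hasum]
              ring
          · refine ⟨t', ht'.trans (Multiset.erase_le x' a), s, hs, hcard, ?_⟩
            rw [sval_cons_r, hsr, hpar.neg_one_pow, hval, hasum]
            ring
      | sr y =>
          rcases Multiset.mem_add.1 hg with h1 | h1
          · obtain ⟨x, _, hx⟩ := Multiset.mem_map.1 h1
            exact absurd hx (by simp)
          obtain ⟨y', hyb, hy'⟩ := Multiset.mem_map.1 h1
          have hyy : y' = y := by injection hy'
          subst hyy
          have ht : (rest : Multiset (DihedralGroup n)) =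
              a.map DihedralGroup.r + (b.erase y').map DihedralGroup.sr := by
            have h' : DihedralGroup.sr y' ::ₘ (rest : Multiset (DihedralGroup n)) =
                DihedralGroup.sr y' ::ₘ
                  (a.map DihedralGroup.r + (b.erase y').map DihedralGroup.sr) := by
              rw [h]
              conv_lhs => rw [← Multiset.cons_erase hyb, Multiset.map_cons,
                Multiset.add_cons]
            exact (Multiset.cons_inj_right _).1 h'
          have hsr : srct rest = Multiset.card (b.erase y') := srct_eq rest _ _ ht
          have hce : Multiset.card (b.erase y') = Multiset.card b - 1 :=
            Multiset.card_erase_of_mem hyb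
          have hbsum : b.sum = y' + (b.erase y').sum := by
            conv_lhs => rw [← Multiset.cons_erase hyb, Multiset.sum_cons]
          have hbpos : 0 < Multiset.card b := Multiset.card_pos.2 hb
          by_cases hbe : b.erase y' = 0
          · have hb1 : b = {y'} := by
              rw [← Multiset.cons_erase hyb, hbe, Multiset.cons_zero]
            have hrest : (rest : Multiset (DihedralGroup n)) = a.map DihedralGroup.r := by
              rw [ht, hbe]; simp
            have hsv : sval rest = a.sum := sval_coe_map_r rest a hrest
            have h0 : srct rest = 0 := by rw [hsr, hbe]; rfl
            refine ⟨a, le_refl a, b, le_refl b, ?_, ?_⟩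
            · rw [hb1]; simp
            · rw [sval_cons_sr, h0, pow_zero, one_mul, hsv, hb1, Multiset.sum_singleton]
              ring
          · obtain ⟨t', ht', s', hs', hcard', hval'⟩ := ih a (b.erase y') ht hbe
            have hcbe : 0 < Multiset.card (b.erase y') := Multiset.card_pos.2 hbe
            rcases Nat.even_or_odd (Multiset.card b) with hpar | hpar
            · refine ⟨t', ht', s', hs'.trans (Multiset.erase_le y' b), ?_, ?_⟩
              · rw [hcard', hce]
                rw [Nat.even_iff] at hpar
                omega
              · have hodd : Odd (Multiset.card (b.erase y')) := by
                  rw [Nat.odd_iff, hce]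
                  rw [Nat.even_iff] at hpar
                  omega
                rw [sval_cons_sr, hsr, hodd.neg_one_pow, hval', hbsum]
                ring
            · refine ⟨t', ht', y' ::ₘ s', ?_, ?_, ?_⟩
              · calc y' ::ₘ s' ≤ y' ::ₘ b.erase y' := Multiset.cons_le_cons y' hs'
                  _ = b := Multiset.cons_erase hyb
              · rw [Multiset.card_cons, hcard', hce]
                rw [Nat.odd_iff] at hpar
                omega
              · have heven : Even (Multiset.card (b.erase y')) := by
                  rw [Nat.even_iff, hce]
                  rw [Nat.odd_iff] at hpar
                  omega
                rw [sval_cons_sr, hsr, heven.neg_one_pow, hval', Multiset.sum_cons, hbsum]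
                ring

lemma backward : ∀ (k : ℕ) (a b t s : Multiset (ZMod n)), Multiset.card b = k →
    t ≤ a → s ≤ b → Multiset.card s = (k + 1) / 2 → b ≠ 0 →
    ∃ l : List (DihedralGroup n),
      (l : Multiset (DihedralGroup n)) = a.map DihedralGroup.r + b.map DihedralGroup.sr ∧
      sval l = (t.sum + t.sum - a.sum) + (s.sum + s.sum - b.sum) := by
  intro k
  induction k with
  | zero =>
      intro a b t s hk _ _ _ hb
      exact absurd (Multiset.card_eq_zero.1 hk) hb
  | succ k ih =>
      intro a b t s hk ht hs hcard hb
      by_cases hk0 : k = 0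
      · -- base case : card b = 1
        subst hk0
        obtain ⟨y, hby⟩ := Multiset.card_eq_one.1 hk
        have hsb : s = b := by
          obtain ⟨z, hsz⟩ := Multiset.card_eq_one.1 hcard
          rw [hsz, hby]
          rw [hsz, hby, Multiset.singleton_le, Multiset.mem_singleton] at hs
          rw [hs]
        subst hsb
        refine ⟨((a - t).toList.map DihedralGroup.r) ++
          (DihedralGroup.sr y :: (t.toList.map DihedralGroup.r)), ?_, ?_⟩
        · rw [← Multiset.coe_add, ← Multiset.map_coe, ← Multiset.cons_coe,
            ← Multiset.map_coe, Multiset.coe_toList, Multiset.coe_toList]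
          rw [hby]
          have ha : (a - t) + t = a := tsub_add_cancel_of_le ht
          conv_rhs => rw [← ha]
          rw [Multiset.map_add, Multiset.map_singleton]
          rw [← Multiset.cons_zero (DihedralGroup.sr y), Multiset.add_cons,
            Multiset.add_cons, add_zero]
        · rw [sval_map_r_append]
          have h1 : srct (DihedralGroup.sr y :: t.toList.map DihedralGroup.r) = 1 := by
            rw [srct_cons_sr, srct_map_r]
          have h2 : sval (DihedralGroup.sr y :: t.toList.map DihedralGroup.r) =
              y + t.sum := by
            have h3 := sval_map_r_append t.toList ([] : List (DihedralGroup n))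
            simp only [List.append_nil, sval_nil, srct_nil, pow_zero, one_mul,
              add_zero] at h3
            rw [sval_cons_sr, srct_map_r, pow_zero, one_mul, h3, Multiset.sum_toList]
          rw [h1, h2, pow_one, Multiset.sum_toList]
          have h4 : (a - t).sum + t.sum = a.sum := by
            rw [← Multiset.sum_add, tsub_add_cancel_of_le ht]
          have h5 : (a - t).sum = a.sum - t.sum := eq_sub_of_add_eq h4
          rw [h5, hby, Multiset.sum_singleton]
          ring
      · -- inductive step : card b = k + 1 ≥ 2
        have hk1 : 1 ≤ k := Nat.one_le_iff_ne_zero.2 hk0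
        rcases Nat.even_or_odd (k + 1) with hpar | hpar
        · -- card b even : pick y ∈ b - s, prepend sr y, keep s
          have hbs : Multiset.card (b - s) = (k + 1) - (k + 1 + 1) / 2 := by
            rw [Multiset.card_sub hs, hk, hcard]
          have hbsne : b - s ≠ 0 := by
            rw [← Multiset.card_pos, hbs]
            rw [Nat.even_iff] at hpar
            omega
          obtain ⟨y, hy⟩ := Multiset.exists_mem_of_ne_zero hbsne
          have hyb : y ∈ b := Multiset.mem_of_le (Multiset.sub_le_self b s) hy
          have hsby : s ≤ b.erase y := by
            have hbdec : b = y ::ₘ (((b - s).erase y) + s) := by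
              conv_lhs => rw [← tsub_add_cancel_of_le hs]
              conv_lhs => rw [← Multiset.cons_erase hy]
              rw [Multiset.cons_add]
            have : b.erase y = ((b - s).erase y) + s := by
              conv_lhs => rw [hbdec]
              rw [Multiset.erase_cons_head]
            rw [this]
            exact Multiset.le_add_left s _
          have hce : Multiset.card (b.erase y) = k := by
            rw [Multiset.card_erase_of_mem hyb, hk]; rfl
          have hbene : b.erase y ≠ 0 := by
            rw [← Multiset.card_pos, hce]; omega
          obtain ⟨l', hl', hval'⟩ := ih a (b.erase y) t s hce ht hsby
            (by rw [hcard]; rw [Nat.even_iff] at hpar; omega) hbene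
          refine ⟨DihedralGroup.sr y :: l', ?_, ?_⟩
          · rw [← Multiset.cons_coe, hl']
            conv_rhs => rw [← Multiset.cons_erase hyb, Multiset.map_cons,
              Multiset.add_cons]
          · have hsr : srct l' = k := by rw [srct_eq l' _ _ hl', hce]
            have hodd : Odd k := by
              rw [Nat.odd_iff]
              rw [Nat.even_iff] at hpar
              omega
            have hbsum : b.sum = y + (b.erase y).sum := by
              conv_lhs => rw [← Multiset.cons_erase hyb, Multiset.sum_cons]
            rw [sval_cons_sr, hsr, hodd.neg_one_pow, hval', hbsum]
            ring
        · -- card b odd : pick y ∈ s, prepend sr y, use s.erase y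
          have hsne : s ≠ 0 := by
            rw [← Multiset.card_pos, hcard]
            omega
          obtain ⟨y, hy⟩ := Multiset.exists_mem_of_ne_zero hsne
          have hyb : y ∈ b := Multiset.mem_of_le hs hy
          have hce : Multiset.card (b.erase y) = k := by
            rw [Multiset.card_erase_of_mem hyb, hk]; rfl
          have hbene : b.erase y ≠ 0 := by
            rw [← Multiset.card_pos, hce]; omega
          obtain ⟨l', hl', hval'⟩ := ih a (b.erase y) t (s.erase y) hce ht
            (Multiset.erase_le_erase y hs)
            (by rw [Multiset.card_erase_of_mem hy, hcard, Nat.pred_eq_sub_one]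
                rw [Nat.odd_iff] at hpar
                omega) hbene
          refine ⟨DihedralGroup.sr y :: l', ?_, ?_⟩
          · rw [← Multiset.cons_coe, hl']
            conv_rhs => rw [← Multiset.cons_erase hyb, Multiset.map_cons,
              Multiset.add_cons]
          · have hsr : srct l' = k := by rw [srct_eq l' _ _ hl', hce]
            have heven : Even k := by
              rw [Nat.even_iff]
              rw [Nat.odd_iff] at hpar
              omega
            have hbsum : b.sum = y + (b.erase y).sum := by
              conv_lhs => rw [← Multiset.cons_erase hyb, Multiset.sum_cons]
            have hssum : s.sum = y + (s.erase y).sum := by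
              conv_lhs => rw [← Multiset.cons_erase hy, Multiset.sum_cons]
            rw [sval_cons_sr, hsr, heven.neg_one_pow, hval', hbsum, hssum]
            ring

end Dih14

open ProductOne DihedralGroup in
/-- For a sequence `S` over the dihedral group `D_{2n}` (`n ≥ 3`) not
consisting solely of terms from `⟨α⟩`, written as `S_{⟨α⟩} = α^{x₁} ⋯ α^{x_s}` (encoded
by the multiset `a`) together with the multiset `b` of the `+`-values of `S_{τ⟨α⟩}`
(so `S_{τ⟨α⟩} = (τα^{y})_{y ∈ b}` and `ℓ = |b| ≥ 1`), one has
`π(S) = τ^ℓ ({x₁,-x₁} + ⋯ + {x_s,-x_s} + (-1)^ℓ Σ_{⌊ℓ/2⌋}(2 S⁺_{τ⟨α⟩})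
        - (-1)^ℓ σ(S⁺_{τ⟨α⟩}))^*`. -/
theorem piSet_dihedral (n : ℕ) (hn : 3 ≤ n) (a b : Multiset (ZMod n)) (hb : b ≠ 0) :
    piSet (a.map DihedralGroup.r + b.map DihedralGroup.sr) =
      (fun z : ZMod n =>
          (DihedralGroup.sr 0 : DihedralGroup n) ^ Multiset.card b * DihedralGroup.r z) ''
        {z : ZMod n | ∃ x ∈ signedSums a,
          ∃ y ∈ subseqSums (Multiset.card b / 2) (b.map fun v => 2 * v),
            z = x + (-1 : ZMod n) ^ Multiset.card b * y -
                (-1 : ZMod n) ^ Multiset.card b * b.sum} := by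
    classical
  ext g
  simp only [piSet, Set.mem_setOf_eq, Set.mem_image, signedSums, subseqSums]
  constructor
  · rintro ⟨l, hl, rfl⟩
    obtain ⟨t, ht, s, hs, hcard, hval⟩ := Dih14.forward l a b hl hb
    refine ⟨Dih14.sval l, ?_, ?_⟩
    · rcases Nat.even_or_odd (Multiset.card b) with hpar | hpar
      · refine ⟨t.sum + t.sum - a.sum, ⟨t, ht, rfl⟩,
          (s.map fun v => 2 * v).sum,
          ⟨s.map fun v => 2 * v, Multiset.map_le_map hs, ?_, rfl⟩, ?_⟩
        · rw [Multiset.card_map, hcard]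
          rw [Nat.even_iff] at hpar; omega
        · rw [hval, hpar.neg_one_pow, Dih14.sum_map_two]
          ring
      · refine ⟨t.sum + t.sum - a.sum, ⟨t, ht, rfl⟩,
          ((b - s).map fun v => 2 * v).sum,
          ⟨(b - s).map fun v => 2 * v, Multiset.map_le_map tsub_le_self, ?_, rfl⟩, ?_⟩
        · rw [Multiset.card_map, Multiset.card_sub hs, hcard]
          rw [Nat.odd_iff] at hpar; omega
        · have hbs : (b - s).sum = b.sum - s.sum := by
            have h4 : (b - s).sum + s.sum = b.sum := by
              rw [← Multiset.sum_add, tsub_add_cancel_of_le hs]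
            exact eq_sub_of_add_eq h4
          rw [hval, hpar.neg_one_pow, Dih14.sum_map_two, hbs]
          ring
    · rw [Dih14.prod_eq l, Dih14.srct_eq l a b hl]
  · rintro ⟨z, ⟨x, ⟨t, ht, hx⟩, y, ⟨u, hu, hucard, huy⟩, hz⟩, rfl⟩
    obtain ⟨u', hu', humap⟩ := Dih14.exists_of_le_map _ u b hu
    have hy2 : y = 2 * u'.sum := by rw [← huy, ← humap, Dih14.sum_map_two]
    have hcu' : Multiset.card u' = Multiset.card b / 2 := by
      rw [← hucard, ← humap, Multiset.card_map]
    rcases Nat.even_or_odd (Multiset.card b) with hpar | hpar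
    · obtain ⟨l, hl, hval⟩ := Dih14.backward (Multiset.card b) a b t u' rfl ht hu'
        (by rw [hcu']; rw [Nat.even_iff] at hpar; omega) hb
      refine ⟨l, hl, ?_⟩
      rw [Dih14.prod_eq l, Dih14.srct_eq l a b hl]
      have harg : Dih14.sval l = z := by
        rw [hval, hz, hx, hy2, hpar.neg_one_pow]
        ring
      rw [harg]
    · have hbu : b - u' ≤ b := tsub_le_self
      have hbusum : (b - u').sum = b.sum - u'.sum := by
        have h4 : (b - u').sum + u'.sum = b.sum := by
          rw [← Multiset.sum_add, tsub_add_cancel_of_le hu']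
        exact eq_sub_of_add_eq h4
      obtain ⟨l, hl, hval⟩ := Dih14.backward (Multiset.card b) a b t (b - u') rfl ht hbu
        (by rw [Multiset.card_sub hu', hcu']; rw [Nat.odd_iff] at hpar; omega) hb
      refine ⟨l, hl, ?_⟩
      rw [Dih14.prod_eq l, Dih14.srct_eq l a b hl]
      have harg : Dih14.sval l = z := by
        rw [hval, hz, hx, hy2, hpar.neg_one_pow, hbusum]
        ring
      rw [harg]
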